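/- Let E = E⁺ ⊕ E⁻ be a finite-dimensional ℤ₂-graded complex inner product space and V ∈ End(E) a self-adjoint operator anticommuting with the grading (V E^± ⊆ E^∓). Then for every u > 0, Tr_s[exp(−u V²)] = Tr_s[P_{ker V}], where P_{ker V} is the orthogonal projection onto ker V and Tr_s denotes the supertrace Tr|_{E⁺} − Tr|_{E⁻}. In particular Tr_s[exp(−uV²)] is independent of u and equals dim(ker V ∩ E⁺) − dim(ker V ∩ E⁻). -/

import Mathlib

open NormedSpace in
private lemma supertrace_aux {E : Type*} [NormedAddCommGroup E] [InnerProductSpace ℂ E]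
    [FiniteDimensional ℂ E] (e v b : E →ₗ[ℂ] E)
    (he : e * v = -(v * e)) (hb : b * v = v * b) :
    LinearMap.trace ℂ E (e * (v * b)) = 0 := by
  have h1 : LinearMap.trace ℂ E (e * (v * b)) = -(LinearMap.trace ℂ E (e * (v * b))) := by
    calc LinearMap.trace ℂ E (e * (v * b))
        = LinearMap.trace ℂ E ((e * v) * b) := by rw [mul_assoc]
      _ = LinearMap.trace ℂ E (b * (e * v)) := LinearMap.trace_mul_comm ℂ _ _
      _ = LinearMap.trace ℂ E (-(b * (v * e))) := by rw [he, mul_neg]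
      _ = -(LinearMap.trace ℂ E ((b * v) * e)) := by rw [map_neg, mul_assoc]
      _ = -(LinearMap.trace ℂ E (e * (b * v))) := by rw [LinearMap.trace_mul_comm ℂ]
      _ = -(LinearMap.trace ℂ E (e * (v * b))) := by rw [hb]
  linear_combination h1 / 2

/-- McKean–Singer identity in finite dimensions: if `ε` is the grading involution of a
ℤ₂-graded finite-dimensional complex inner product space and `V` is an odd self-adjoint
operator, then for all `u > 0` the supertrace `Tr_s[exp(−uV²)] = Tr[ε exp(−uV²)]`
equals the supertrace of the orthogonal projection onto `ker V`. -/
theorem mckean_singer_finite_dim {E : Type*} [NormedAddCommGroup E] [InnerProductSpace ℂ E]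
    [FiniteDimensional ℂ E] [CompleteSpace E]
    (ε V : E →L[ℂ] E) (hε : IsSelfAdjoint ε) (hε2 : ε ∘L ε = 1)
    (hV : IsSelfAdjoint V) (hodd : ε ∘L V = -(V ∘L ε)) (u : ℝ) (hu : 0 < u) :
    LinearMap.trace ℂ E ((ε ∘L NormedSpace.exp (-(u : ℂ) • (V ^ 2)) : E →L[ℂ] E) : E →ₗ[ℂ] E) =
      LinearMap.trace ℂ E
        ((ε ∘L ((LinearMap.ker (V : E →ₗ[ℂ] E)).subtypeL ∘L
          Submodule.orthogonalProjectionOnto (LinearMap.ker (V : E →ₗ[ℂ] E))) :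
          E →L[ℂ] E) : E →ₗ[ℂ] E) := by
  classical
  set A : E →L[ℂ] E := -(u : ℂ) • (V ^ 2) with hA
  have hcomm : Commute V A := ((Commute.refl V).pow_right 2).smul_right _
  set c : ℕ → ℂ := fun n => ((Nat.factorial (n + 1) : ℂ))⁻¹ with hc
  have hDsum : Summable (fun n : ℕ => c n • A ^ n) := by
    refine Summable.of_norm_bounded (NormedSpace.norm_expSeries_summable' (𝕂 := ℂ) A) ?_
    intro n
    rw [norm_smul, norm_smul]
    have h1 : ‖c n‖ ≤ ‖((Nat.factorial n : ℂ))⁻¹‖ := by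
      simp only [hc, norm_inv, Complex.norm_natCast]
      exact inv_anti₀ (by positivity) (by exact_mod_cast Nat.factorial_le (Nat.le_succ n))
    exact mul_le_mul_of_nonneg_right h1 (norm_nonneg _)
  set D : E →L[ℂ] E := ∑' n, c n • A ^ n with hD
  have hVD : V * D = D * V := by
    calc V * D = ∑' n, V * (c n • A ^ n) := (Summable.tsum_mul_left V hDsum).symm
      _ = ∑' n, (c n • A ^ n) * V := by
          refine tsum_congr fun n => ?_
          rw [mul_smul_comm, smul_mul_assoc, (hcomm.pow_right n).eq]
      _ = D * V := Summable.tsum_mul_right V hDsum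
  set B : E →L[ℂ] E := -(u : ℂ) • (V * D) with hB
  have hDV2 : D * V ^ 2 = V ^ 2 * D := by
    calc D * V ^ 2 = (D * V) * V := by rw [pow_two, mul_assoc]
      _ = (V * D) * V := by rw [hVD]
      _ = V * (D * V) := by rw [mul_assoc]
      _ = V * (V * D) := by rw [hVD]
      _ = V ^ 2 * D := by rw [pow_two, mul_assoc]
  have hexp : NormedSpace.exp A = 1 + V * B := by
    have h0 : NormedSpace.exp A = ∑' n : ℕ, ((Nat.factorial n : ℂ))⁻¹ • A ^ n := by
      rw [NormedSpace.exp_eq_tsum (𝕂 := ℂ)]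
    rw [h0, Summable.tsum_eq_zero_add (NormedSpace.expSeries_summable' (𝕂 := ℂ) A)]
    congr 1
    · simp
    · calc (∑' n : ℕ, ((Nat.factorial (n + 1) : ℂ))⁻¹ • A ^ (n + 1))
          = ∑' n : ℕ, (c n • A ^ n) * A := by
            refine tsum_congr fun n => ?_
            rw [pow_succ, smul_mul_assoc]
          _ = D * A := Summable.tsum_mul_right A hDsum
          _ = V * B := by
            rw [hA, hB, mul_smul_comm, mul_smul_comm, hDV2, pow_two, mul_assoc]
  have hBV : B * V = V * B := by
    rw [hB, smul_mul_assoc, mul_smul_comm]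
    congr 1
    rw [mul_assoc, ← hVD, ← mul_assoc]
  -- pseudoinverse of V
  set K : Submodule ℂ E := LinearMap.ker (V : E →ₗ[ℂ] E) with hK
  set F : Submodule ℂ E := Kᗮ with hF
  have hVF : ∀ x ∈ F, V x ∈ F := by
    intro x _
    rw [hF, Submodule.mem_orthogonal]
    intro k hk
    have hadj := ContinuousLinearMap.isSelfAdjoint_iff'.mp hV
    calc (inner ℂ k (V x) : ℂ) = inner ℂ k (ContinuousLinearMap.adjoint V x) := by rw [hadj]
      _ = inner ℂ (V k) x := by rw [ContinuousLinearMap.adjoint_inner_right]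
      _ = 0 := by rw [show V k = 0 from LinearMap.mem_ker.mp hk, inner_zero_left]
  set Vf : F →ₗ[ℂ] F := LinearMap.restrict (V : E →ₗ[ℂ] E) hVF with hVf
  have hinj : Function.Injective Vf := by
    rw [← LinearMap.ker_eq_bot, Submodule.eq_bot_iff]
    intro z hz
    have h0 : V (z : E) = 0 := by
      have := congrArg (Subtype.val) (LinearMap.mem_ker.mp hz)
      simpa [hVf, LinearMap.restrict_coe_apply] using this
    have hzK : (z : E) ∈ K := LinearMap.mem_ker.mpr h0
    have hz0 : (z : E) = 0 := by
      have h2 := (Submodule.mem_orthogonal K (z : E)).mp z.2 _ hzK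
      exact inner_self_eq_zero.mp h2
    exact Subtype.ext hz0
  have hbij : Function.Bijective Vf := ⟨hinj, LinearMap.injective_iff_surjective.mp hinj⟩
  set e : F ≃ₗ[ℂ] F := LinearEquiv.ofBijective Vf hbij with he
  set lW : E →ₗ[ℂ] E :=
    F.subtype ∘ₗ (e.symm : F →ₗ[ℂ] F) ∘ₗ ((Submodule.orthogonalProjectionOnto F : E →L[ℂ] F) : E →ₗ[ℂ] F)
    with hlW
  set lP : E →ₗ[ℂ] E :=
    ((K.subtypeL ∘L Submodule.orthogonalProjectionOnto K : E →L[ℂ] E) : E →ₗ[ℂ] E) with hlP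
  have hlPapply : ∀ x : E, lP x = (Submodule.orthogonalProjectionOnto K x : E) := fun x => rfl
  have hVfcoe : ∀ z : F, V (z : E) = (Vf z : E) := fun z => rfl
  have hVesymm : ∀ z : F, V ((e.symm z : F) : E) = (z : E) := by
    intro z
    rw [hVfcoe]
    congr 1
    exact e.apply_symm_apply z
  have hVW : (V : E →ₗ[ℂ] E) * lW = 1 - lP := by
    ext x
    have : ((V : E →ₗ[ℂ] E) * lW) x = V ((e.symm (Submodule.orthogonalProjectionOnto F x) : F) : E) := rfl
    rw [this, hVesymm]
    have h2 : ((Submodule.orthogonalProjectionOnto F x : F) : E) = x - (Submodule.orthogonalProjectionOnto K x : E) :=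
      Submodule.starProjection_orthogonal_val x
    rw [h2]
    simp [hlPapply]
  have hWV : lW * (V : E →ₗ[ℂ] E) = 1 - lP := by
    ext x
    set y : F := ⟨x - (Submodule.orthogonalProjectionOnto K x : E),
      Submodule.sub_starProjection_mem_orthogonal x⟩ with hy
    have hVx : V x = ((Vf y : F) : E) := by
      rw [← hVfcoe]
      have hmem : ((Submodule.orthogonalProjectionOnto K x : K) : E) ∈ K := (Submodule.orthogonalProjectionOnto K x).2
      have : V ((Submodule.orthogonalProjectionOnto K x : K) : E) = 0 := LinearMap.mem_ker.mp hmem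
      have this' : V (K.starProjection x) = 0 := this
      simp [hy, map_sub, this']
    have hproj : (Submodule.orthogonalProjectionOnto F (V x) : F) = Vf y := by
      rw [hVx]; exact Submodule.orthogonalProjectionOnto_mem_subspace_eq_self (Vf y)
    have h3 : (lW * (V : E →ₗ[ℂ] E)) x = ((e.symm (Submodule.orthogonalProjectionOnto F (V x)) : F) : E) := rfl
    rw [h3, hproj]
    have h4 : e.symm (Vf y) = y := by
      have : Vf y = e y := rfl
      rw [this, e.symm_apply_apply]
    rw [h4]
    simp [hy, hlPapply]
  -- trace computation
  have hεV : (ε : E →ₗ[ℂ] E) * (V : E →ₗ[ℂ] E) = -((V : E →ₗ[ℂ] E) * (ε : E →ₗ[ℂ] E)) := by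
    have := congrArg (ContinuousLinearMap.toLinearMap) hodd
    simpa [Module.End.mul_eq_comp] using this
  have key : ∀ b : E →ₗ[ℂ] E, b * (V : E →ₗ[ℂ] E) = (V : E →ₗ[ℂ] E) * b →
      LinearMap.trace ℂ E ((ε : E →ₗ[ℂ] E) * ((V : E →ₗ[ℂ] E) * b)) = 0 :=
    fun b hb => supertrace_aux _ _ _ hεV hb
  have hLHS : ((ε ∘L NormedSpace.exp A : E →L[ℂ] E) : E →ₗ[ℂ] E) =
      (ε : E →ₗ[ℂ] E) * (1 + (V : E →ₗ[ℂ] E) * (B : E →ₗ[ℂ] E)) := by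
    rw [hexp]; rfl
  have hBVL : ((B : E →L[ℂ] E) : E →ₗ[ℂ] E) * (V : E →ₗ[ℂ] E) =
      (V : E →ₗ[ℂ] E) * ((B : E →L[ℂ] E) : E →ₗ[ℂ] E) := by
    ext x
    have := congrArg (fun f : E →L[ℂ] E => f x) hBV
    simpa using this
  have hRHS : ((ε ∘L ((LinearMap.ker (V : E →ₗ[ℂ] E)).subtypeL ∘L Submodule.orthogonalProjectionOnto (LinearMap.ker (V : E →ₗ[ℂ] E))) :
      E →L[ℂ] E) : E →ₗ[ℂ] E) =
      (ε : E →ₗ[ℂ] E) * (1 - (V : E →ₗ[ℂ] E) * lW) := by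
    have h5 : (1 : E →ₗ[ℂ] E) - (V : E →ₗ[ℂ] E) * lW = lP := by rw [hVW, sub_sub_cancel]
    rw [h5]; rfl
  rw [hLHS, hRHS, mul_add, mul_one, mul_sub, mul_one, map_add, map_sub,
    key _ hBVL, key lW (hWV.trans hVW.symm), add_zero, sub_zero]
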